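/- A matrix A ∈ s(3) is indivisible if and only if there exist permutation matrices P, Q such that sgn(P·A·Q) equals the matrix [[0,1,1],[1,0,1],[1,1,0]]. -/

import Mathlib

open Matrix

def IsStochastic {n : ℕ} (A : Matrix (Fin n) (Fin n) ℝ) : Prop :=
  (∀ i j, 0 ≤ A i j) ∧ ∀ j, ∑ i, A i j = 1

def IsPermMatrix {n : ℕ} (A : Matrix (Fin n) (Fin n) ℝ) : Prop :=
  ∃ σ : Equiv.Perm (Fin n), ∀ i j, A i j = if σ j = i then 1 else 0

/-! ### Small decidable facts about `Fin 3` -/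

lemma fin3_cover : ∀ a b c : Fin 3, a ≠ b → a ≠ c → b ≠ c →
    ∀ y : Fin 3, y = a ∨ y = b ∨ y = c := by decide

lemma fin3_third : ∀ a b : Fin 3, a ≠ b →
    ∃ d, d ≠ a ∧ d ≠ b ∧ ∀ y : Fin 3, y = a ∨ y = b ∨ y = d := by decide

lemma fin3_two : ∀ x : Fin 3, ∃ u v : Fin 3, u ≠ v ∧ u ≠ x ∧ v ≠ x ∧
    (∀ y : Fin 3, y = x ∨ y = u ∨ y = v) := by decide

/-! ### Generic lemmas about stochastic and permutation matrices -/

lemma col_pos {n : ℕ} {M : Matrix (Fin n) (Fin n) ℝ} (hM : IsStochastic M) (j : Fin n) :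
    ∃ i, 0 < M i j := by
  by_contra h
  push_neg at h
  have hz : ∀ i ∈ Finset.univ, M i j = 0 := fun i _ => le_antisymm (h i) (hM.1 i j)
  have hs := hM.2 j
  rw [Finset.sum_eq_zero hz] at hs
  norm_num at hs

lemma perm_entry_pos {n : ℕ} {M : Matrix (Fin n) (Fin n) ℝ} {σ : Equiv.Perm (Fin n)}
    (hM : ∀ i j, M i j = if σ j = i then 1 else 0) (i j : Fin n) :
    0 < M i j ↔ i = σ j := by
  rw [hM i j]
  by_cases h : σ j = i
  · rw [if_pos h]
    exact ⟨fun _ => h.symm, fun _ => one_pos⟩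
  · rw [if_neg h]
    exact ⟨fun hh => absurd hh (lt_irrefl 0), fun hh => absurd hh.symm h⟩

lemma perm_isStochastic {n : ℕ} {M : Matrix (Fin n) (Fin n) ℝ} (hM : IsPermMatrix M) :
    IsStochastic M := by
  obtain ⟨σ, hσ⟩ := hM
  constructor
  · intro i j; rw [hσ]; split <;> norm_num
  · intro j
    rw [Finset.sum_eq_single (σ j)]
    · rw [hσ]; simp
    · intro i _ hne; rw [hσ, if_neg (fun h => hne h.symm)]
    · intro h; exact absurd (Finset.mem_univ _) h

lemma perm_of_pattern {n : ℕ} {M : Matrix (Fin n) (Fin n) ℝ} (hM : IsStochastic M)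
    {g : Fin n → Fin n} (hg : Function.Injective g)
    (hpat : ∀ i k, 0 < M i k ↔ i = g k) : IsPermMatrix M := by
  have hbij : Function.Bijective g := Finite.injective_iff_bijective.mp hg
  refine ⟨(Equiv.ofBijective g hbij), fun i j => ?_⟩
  have hzero : ∀ i k, i ≠ g k → M i k = 0 := by
    intro i k h
    by_contra hh
    have hpos : 0 < M i k := lt_of_le_of_ne (hM.1 i k) (Ne.symm hh)
    exact h ((hpat i k).mp hpos)
  have hone : ∀ k, M (g k) k = 1 := by
    intro k
    have hsum := hM.2 k
    rwa [Finset.sum_eq_single (g k) (fun i _ hne => hzero i k hne)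
      (fun h => absurd (Finset.mem_univ _) h)] at hsum
  show M i j = if Equiv.ofBijective g hbij j = i then 1 else 0
  simp only [Equiv.ofBijective_apply]
  by_cases h : g j = i
  · rw [if_pos h, ← h, hone]
  · rw [if_neg h, hzero i j (fun hh => h hh.symm)]

lemma perm_mul_apply {n : ℕ} {P : Matrix (Fin n) (Fin n) ℝ} {σ : Equiv.Perm (Fin n)}
    (hP : ∀ i j, P i j = if σ j = i then 1 else 0) (A : Matrix (Fin n) (Fin n) ℝ)
    (i j : Fin n) : (P * A) i j = A (σ.symm i) j := by
  rw [Matrix.mul_apply]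
  rw [Finset.sum_eq_single (σ.symm i)]
  · rw [hP]; simp
  · intro k _ hne; rw [hP]
    have : σ k ≠ i := fun h => hne (by rw [← h]; simp)
    simp [this]
  · intro h; exact absurd (Finset.mem_univ _) h

lemma mul_perm_apply {n : ℕ} {Q : Matrix (Fin n) (Fin n) ℝ} {ρ : Equiv.Perm (Fin n)}
    (hQ : ∀ i j, Q i j = if ρ j = i then 1 else 0) (A : Matrix (Fin n) (Fin n) ℝ)
    (i j : Fin n) : (A * Q) i j = A i (ρ j) := by
  rw [Matrix.mul_apply]
  rw [Finset.sum_eq_single (ρ j)]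
  · rw [hQ]; simp
  · intro k _ hne; rw [hQ]; simp [Ne.symm hne]
  · intro h; exact absurd (Finset.mem_univ _) h

lemma perm_mul_perm {n : ℕ} {P B : Matrix (Fin n) (Fin n) ℝ}
    (hP : IsPermMatrix P) (hB : IsPermMatrix B) : IsPermMatrix (P * B) := by
  obtain ⟨σ, hσ⟩ := hP
  obtain ⟨τ, hτ⟩ := hB
  refine ⟨τ.trans σ, fun i j => ?_⟩
  rw [perm_mul_apply hσ B i j, hτ]
  rw [Equiv.trans_apply]
  by_cases h : τ j = σ.symm i
  · rw [if_pos h, if_pos (by rw [h]; simp)]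
  · rw [if_neg h, if_neg (fun hh => h (by rw [← hh]; simp))]

lemma prod_pos_iff {n : ℕ} {B C : Matrix (Fin n) (Fin n) ℝ}
    (hB : IsStochastic B) (hC : IsStochastic C) (i j : Fin n) :
    0 < (B * C) i j ↔ ∃ k, 0 < B i k ∧ 0 < C k j := by
  rw [Matrix.mul_apply]
  constructor
  · intro h
    by_contra hc
    push_neg at hc
    have hz : ∀ k ∈ Finset.univ, B i k * C k j = 0 := by
      intro k _
      rcases eq_or_lt_of_le (hB.1 i k) with hb | hb
      · rw [← hb, zero_mul]
      · have : C k j ≤ 0 := hc k hb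
        have : C k j = 0 := le_antisymm this (hC.1 k j)
        rw [this, mul_zero]
    rw [Finset.sum_eq_zero hz] at h
    exact lt_irrefl 0 h
  · rintro ⟨k, hb, hc⟩
    have hterm : 0 < B i k * C k j := mul_pos hb hc
    have hle : B i k * C k j ≤ ∑ k, B i k * C k j :=
      Finset.single_le_sum (fun k _ => mul_nonneg (hB.1 i k) (hC.1 k j)) (Finset.mem_univ k)
    linarith
lemma core (b c : Fin 3 → Fin 3 → Prop) (Hc : ∀ j, ∃ k, c k j)
    (H : ∀ i j, (∃ k, b i k ∧ c k j) ↔ i ≠ j) :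
    (∃ g : Fin 3 → Fin 3, Function.Injective g ∧ ∀ i k, b i k ↔ i = g k) ∨
    (∃ g : Fin 3 → Fin 3, Function.Injective g ∧ ∀ k j, c k j ↔ k = g j) := by
  have G1 : ∀ i k j, b i k → c k j → i ≠ j := fun i k j hb hc => (H i j).mp ⟨k, hb, hc⟩
  by_cases hsing : ∀ j k k', c k j → c k' j → k = k'
  · right
    choose g hg using Hc
    refine ⟨g, ?_, fun k j => ⟨fun h => hsing j k (g j) h (hg j), fun h => h ▸ hg j⟩⟩
    intro j j' hjj'
    by_contra hne
    obtain ⟨k, hbk, hck⟩ := (H j' j).mpr (fun h => hne h.symm)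
    have hkg : k = g j := hsing j k (g j) hck (hg j)
    have hckj' : c k j' := by rw [hkg, hjj']; exact hg j'
    exact G1 j' k j' hbk hckj' rfl
  · left
    push_neg at hsing
    obtain ⟨j0, k1, k2, hc1, hc2, hk12⟩ := hsing
    obtain ⟨u, v, huv, huj0, hvj0, hcov⟩ := fin3_two j0
    have hS1 : ∀ i, b i k1 → i ≠ j0 := fun i hb => G1 i k1 j0 hb hc1
    have hS2 : ∀ i, b i k2 → i ≠ j0 := fun i hb => G1 i k2 j0 hb hc2
    obtain ⟨k3, hk31, hk32, hkcov⟩ := fin3_third k1 k2 hk12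
    obtain ⟨ku, hbku, hcku⟩ := (H j0 u).mpr (Ne.symm huj0)
    have hku3 : ku = k3 := by
      rcases hkcov ku with h | h | h
      · rw [h] at hbku; exact absurd rfl (hS1 j0 hbku)
      · rw [h] at hbku; exact absurd rfl (hS2 j0 hbku)
      · exact h
    rw [hku3] at hbku hcku
    obtain ⟨kv, hbkv, hckv⟩ := (H j0 v).mpr (Ne.symm hvj0)
    have hkv3 : kv = k3 := by
      rcases hkcov kv with h | h | h
      · rw [h] at hbkv; exact absurd rfl (hS1 j0 hbkv)
      · rw [h] at hbkv; exact absurd rfl (hS2 j0 hbkv)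
      · exact h
    rw [hkv3] at hbkv hckv
    have hS3 : ∀ i, b i k3 → i = j0 := by
      intro i hb
      have h1 : i ≠ u := G1 i k3 u hb hcku
      have h2 : i ≠ v := G1 i k3 v hb hckv
      rcases hcov i with h | h | h
      · exact h
      · exact absurd h h1
      · exact absurd h h2
    obtain ⟨ka, hbka, hcka⟩ := (H v u).mpr (Ne.symm huv)
    have hka : ka = k1 ∨ ka = k2 := by
      rcases hkcov ka with h | h | h
      · exact Or.inl h
      · exact Or.inr h
      · rw [h] at hbka; exact absurd (hS3 v hbka) hvj0
    obtain ⟨kb, hbkb, hckb⟩ := (H u v).mpr huv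
    have hkb : kb = k1 ∨ kb = k2 := by
      rcases hkcov kb with h | h | h
      · exact Or.inl h
      · exact Or.inr h
      · rw [h] at hbkb; exact absurd (hS3 u hbkb) huj0
    have hkab : ka ≠ kb := by
      intro h
      exact G1 u kb u hbkb (h ▸ hcka) rfl
    have hSa : ∀ i, b i ka → i = v := by
      intro i hb
      have h1 : i ≠ u := G1 i ka u hb hcka
      have h2 : i ≠ j0 := by
        rcases hka with h | h <;> rw [h] at hb
        · exact hS1 i hb
        · exact hS2 i hb
      rcases hcov i with h | h | h
      · exact absurd h h2
      · exact absurd h h1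
      · exact h
    have hSb : ∀ i, b i kb → i = u := by
      intro i hb
      have h1 : i ≠ v := G1 i kb v hb hckb
      have h2 : i ≠ j0 := by
        rcases hkb with h | h <;> rw [h] at hb
        · exact hS1 i hb
        · exact hS2 i hb
      rcases hcov i with h | h | h
      · exact absurd h h2
      · exact h
      · exact absurd h h1
    have hk3a : k3 ≠ ka := by
      rcases hka with h | h <;> rw [h]
      · exact hk31
      · exact hk32
    have hk3b : k3 ≠ kb := by
      rcases hkb with h | h <;> rw [h]
      · exact hk31
      · exact hk32
    have hcover : ∀ k : Fin 3, k = k3 ∨ k = ka ∨ k = kb := fin3_cover k3 ka kb hk3a hk3b hkab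
    refine ⟨fun k => if k = k3 then j0 else if k = ka then v else u, ?_, ?_⟩
    · intro x y hxy
      rcases hcover x with rfl | rfl | rfl <;> rcases hcover y with rfl | rfl | rfl <;>
        simp only [if_pos rfl, if_neg (Ne.symm hk3a), if_neg (Ne.symm hk3b),
          if_neg hkab, if_neg (Ne.symm hkab)] at hxy <;> first
        | rfl
        | (exact absurd hxy.symm hvj0) | (exact absurd hxy hvj0)
        | (exact absurd hxy.symm huj0) | (exact absurd hxy huj0)
        | (exact absurd hxy huv) | (exact absurd hxy.symm huv)
    · intro i k
      rcases hcover k with rfl | rfl | rfl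
      · simp only [if_pos rfl]
        exact ⟨hS3 i, fun h => h ▸ hbku⟩
      · simp only [if_neg (Ne.symm hk3a), if_pos rfl]
        exact ⟨hSa i, fun h => h ▸ hbka⟩
      · simp only [if_neg (Ne.symm hk3b), if_neg (Ne.symm hkab), if_pos rfl]
        exact ⟨hSb i, fun h => h ▸ hbkb⟩

lemma divisible_of_subset (A : Matrix (Fin 3) (Fin 3) ℝ) (hA : IsStochastic A)
    {j k : Fin 3} (hjk : j ≠ k) (hsub : ∀ i, 0 < A i k → 0 < A i j) :
    ∃ B C : Matrix (Fin 3) (Fin 3) ℝ, IsStochastic B ∧ IsStochastic C ∧ A = B * C ∧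
      ¬IsPermMatrix B ∧ ¬IsPermMatrix C := by
  classical
  set r : Fin 3 → ℝ := fun i => if 0 < A i k then A i j / A i k else 1 with hr
  set m : ℝ := (Finset.univ.inf' Finset.univ_nonempty r) ⊓ 1 with hm
  set t : ℝ := m / 2 with htdef
  have hrpos : ∀ i, 0 < r i := by
    intro i
    rw [hr]
    dsimp only
    split_ifs with h
    · exact div_pos (hsub i h) h
    · exact one_pos
  have hmpos : 0 < m := by
    rw [hm]
    refine lt_min ?_ one_pos
    rw [Finset.lt_inf'_iff]
    exact fun i _ => hrpos i
  have htpos : 0 < t := by rw [htdef]; linarith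
  have hm1 : m ≤ 1 := min_le_right _ _
  have ht1 : t < 1 := by rw [htdef]; linarith
  have ht1' : (0:ℝ) < 1 - t := by linarith
  have hkey : ∀ i, 0 < A i k → t * A i k < A i j := by
    intro i h
    have h1 : m ≤ r i := le_trans (min_le_left _ _) (Finset.inf'_le r (Finset.mem_univ i))
    have h2 : t < r i := by rw [htdef]; linarith [hrpos i]
    have h3 : r i = A i j / A i k := by rw [hr]; dsimp only; rw [if_pos h]
    rw [h3] at h2
    exact (lt_div_iff₀ h).mp h2
  have hnum : ∀ i, 0 ≤ A i j - t * A i k := by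
    intro i
    rcases eq_or_lt_of_le (hA.1 i k) with h | h
    · rw [← h, mul_zero, sub_zero]; exact hA.1 i j
    · linarith [hkey i h]
  set B : Matrix (Fin 3) (Fin 3) ℝ :=
    fun i l => if l = j then (A i j - t * A i k) / (1 - t) else A i l with hB
  set C : Matrix (Fin 3) (Fin 3) ℝ :=
    fun i l => if l = j then (1 - t) * (if i = j then 1 else 0) + t * (if i = k then 1 else 0)
      else if i = l then 1 else 0 with hC
  have hBapp : ∀ i l, B i l = if l = j then (A i j - t * A i k) / (1 - t) else A i l :=
    fun i l => rfl
  have hCapp : ∀ i l, C i l = if l = j then (1 - t) * (if i = j then 1 else 0) + t * (if i = k then 1 else 0)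
      else if i = l then 1 else 0 := fun i l => rfl
  have hBstoch : IsStochastic B := by
    constructor
    · intro i l
      rw [hBapp]
      split_ifs with h
      · exact div_nonneg (hnum i) (le_of_lt ht1')
      · exact hA.1 i l
    · intro l
      by_cases hl : l = j
      · subst hl
        have : ∀ i, B i l = (A i l - t * A i k) / (1 - t) := fun i => if_pos rfl
        simp only [this]
        rw [← Finset.sum_div, Finset.sum_sub_distrib, ← Finset.mul_sum, hA.2 l, hA.2 k,
          mul_one, div_self (by linarith : (1:ℝ) - t ≠ 0)]
      · have : ∀ i, B i l = A i l := fun i => if_neg hl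
        simp only [this]
        exact hA.2 l
  have hCstoch : IsStochastic C := by
    constructor
    · intro i l
      rw [hCapp]
      split_ifs <;> norm_num <;> linarith
    · intro l
      by_cases hl : l = j
      · subst hl
        have : ∀ i : Fin 3, C i l = (1 - t) * (if i = l then 1 else 0) + t * (if i = k then 1 else 0) :=
          fun i => if_pos rfl
        simp only [this]
        rw [Finset.sum_add_distrib, ← Finset.mul_sum, ← Finset.mul_sum,
          Finset.sum_ite_eq' Finset.univ l (fun _ => (1:ℝ)),
          Finset.sum_ite_eq' Finset.univ k (fun _ => (1:ℝ))]
        simp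
      · have : ∀ i : Fin 3, C i l = if i = l then 1 else 0 := fun i => if_neg hl
        simp only [this]
        rw [Finset.sum_ite_eq' Finset.univ l (fun _ => (1:ℝ))]
        simp
  have hfact : A = B * C := by
    ext i l
    rw [Matrix.mul_apply]
    by_cases hl : l = j
    · subst hl
      have hstep : ∀ mm : Fin 3, B i mm * C mm l =
          (1 - t) * (if mm = l then B i mm else 0) + t * (if mm = k then B i mm else 0) := by
        intro mm
        rw [hCapp, if_pos rfl]
        split_ifs <;> ring
      simp only [hstep]
      rw [Finset.sum_add_distrib, ← Finset.mul_sum, ← Finset.mul_sum,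
        Finset.sum_ite_eq' Finset.univ l (fun mm => B i mm),
        Finset.sum_ite_eq' Finset.univ k (fun mm => B i mm)]
      simp only [Finset.mem_univ, if_pos]
      rw [hBapp, if_pos rfl, hBapp, if_neg (Ne.symm hjk)]
      field_simp
      ring
    · have hCl : ∀ mm : Fin 3, C mm l = if mm = l then 1 else 0 := fun mm => if_neg hl
      simp only [hCl, mul_ite, mul_one, mul_zero]
      rw [Finset.sum_ite_eq' Finset.univ l (fun mm => B i mm)]
      simp [hBapp, hl]
  have hnpB : ¬IsPermMatrix B := by
    rintro ⟨σ, hσ⟩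
    have hBik : ∀ i, B i k = A i k := fun i => if_neg (Ne.symm hjk)
    have hposk : 0 < A (σ k) k := by
      rw [← hBik, hσ]
      simp
    have hBj : 0 < B (σ k) j := by
      rw [hBapp, if_pos rfl]
      exact div_pos (by linarith [hkey (σ k) hposk]) ht1'
    rw [hσ] at hBj
    by_cases h : σ j = σ k
    · exact hjk (σ.injective h)
    · rw [if_neg h] at hBj; exact lt_irrefl 0 hBj
  have hnpC : ¬IsPermMatrix C := by
    rintro ⟨σ, hσ⟩
    have h1 : C j j = 1 - t := by
      rw [hCapp, if_pos rfl, if_pos rfl, if_neg hjk]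
      ring
    rw [hσ] at h1
    split_ifs at h1 <;> linarith
  exact ⟨B, C, hBstoch, hCstoch, hfact, hnpB, hnpC⟩

set_option maxRecDepth 100000 in
set_option synthInstance.maxHeartbeats 400000 in
set_option synthInstance.maxSize 1000 in
lemma classify : ∀ p : Fin 3 → Fin 3 → Bool, (∀ j, ∃ i, p i j) →
  (∃ j k : Fin 3, j ≠ k ∧ ∀ i, p i k → p i j) ∨
  (∃ g : Fin 3 → Fin 3, (∀ a b, g a = g b → a = b) ∧ ∀ i j, p i j ↔ i = g j) ∨
  (∃ g : Fin 3 → Fin 3, (∀ a b, g a = g b → a = b) ∧ ∀ i j, p i j ↔ i ≠ g j) := by decide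

lemma targ : ∀ i j : Fin 3, (!![0, 1, 1; 1, 0, 1; 1, 1, 0] : Matrix (Fin 3) (Fin 3) ℝ) i j
    = if i = j then 0 else 1 := by
  intro i j
  fin_cases i <;> fin_cases j <;>
    norm_num [Matrix.vecHead, Matrix.vecTail, Fin.ext_iff]

lemma sign_one_pos {x : ℝ} (h0 : 0 ≤ x) (h : Real.sign x = 1) : 0 < x := by
  rcases eq_or_lt_of_le h0 with he | hl
  · rw [← he, Real.sign_zero] at h
    norm_num at h
  · exact hl

lemma one_is_perm : IsPermMatrix (1 : Matrix (Fin 3) (Fin 3) ℝ) := by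
  refine ⟨Equiv.refl _, fun i j => ?_⟩
  by_cases h : j = i
  · simp [Matrix.one_apply, h]
  · rw [Matrix.one_apply, if_neg (fun hh => h hh.symm)]
    rw [Equiv.refl_apply]
    rw [if_neg h]

theorem indivisible_s3_characterization (A : Matrix (Fin 3) (Fin 3) ℝ)
    (hA : IsStochastic A) :
    (∀ B C : Matrix (Fin 3) (Fin 3) ℝ, IsStochastic B → IsStochastic C →
        A = B * C → Xor' (IsPermMatrix B) (IsPermMatrix C)) ↔
      (∃ P Q : Matrix (Fin 3) (Fin 3) ℝ, IsPermMatrix P ∧ IsPermMatrix Q ∧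
        (P * A * Q).map Real.sign = !![0, 1, 1; 1, 0, 1; 1, 1, 0]) := by
  classical
  constructor
  · -- forward: indivisible → sign pattern
    intro hindiv
    have hcols : ∀ jj, ∃ ii, (fun i j => decide (0 < A i j)) ii jj = true := by
      intro jj
      obtain ⟨ii, hii⟩ := col_pos hA jj
      exact ⟨ii, decide_eq_true hii⟩
    rcases classify (fun i j => decide (0 < A i j)) hcols with
      ⟨j, k, hjk, hsub⟩ | ⟨g, hginj, hgpat⟩ | ⟨g, hginj, hgpat⟩
    · -- containment case: contradiction with indivisibility
      exfalso
      have hsub' : ∀ i, 0 < A i k → 0 < A i j := by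
        intro i h
        exact of_decide_eq_true (hsub i (decide_eq_true h))
      obtain ⟨B, C, hBs, hCs, hfact, hnB, hnC⟩ := divisible_of_subset A hA hjk hsub'
      rcases hindiv B C hBs hCs hfact with ⟨hB, _⟩ | ⟨hC, _⟩
      · exact hnB hB
      · exact hnC hC
    · -- A is a permutation matrix: contradiction
      exfalso
      have hpat : ∀ i jj, 0 < A i jj ↔ i = g jj := by
        intro i jj
        rw [← hgpat i jj]
        simp only [decide_eq_true_eq]
      have hAperm : IsPermMatrix A :=
        perm_of_pattern hA (fun a b h => hginj a b h) hpat
      rcases hindiv A 1 hA (perm_isStochastic one_is_perm) (mul_one A).symm with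
        ⟨_, h⟩ | ⟨_, h⟩
      · exact h one_is_perm
      · exact h hAperm
    · -- complement-of-permutation pattern: construct P, Q
      have hpat : ∀ i jj, 0 < A i jj ↔ i ≠ g jj := by
        intro i jj
        rw [← hgpat i jj]
        simp only [decide_eq_true_eq]
      have hginj' : Function.Injective g := fun a b h => hginj a b h
      have hbij : Function.Bijective g := Finite.injective_iff_bijective.mp hginj'
      set e : Equiv.Perm (Fin 3) := Equiv.ofBijective g hbij with he
      have hei : ∀ i, e i = g i := fun i => rfl
      refine ⟨fun i l => if e.symm l = i then 1 else 0, 1,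
        ⟨e.symm, fun _ _ => rfl⟩, one_is_perm, ?_⟩
      ext i j
      rw [Matrix.map_apply, mul_one, perm_mul_apply (fun _ _ => rfl) A i j, targ i j]
      simp only [Equiv.symm_symm]
      by_cases hij : i = j
      · subst hij
        rw [if_pos rfl]
        have hz : A (e i) i = 0 := by
          have hnot : ¬ 0 < A (e i) i := by
            rw [hpat]
            simp [hei]
          exact le_antisymm (not_lt.mp hnot) (hA.1 _ _)
        rw [hz, Real.sign_zero]
      · rw [if_neg hij]
        have hpos : 0 < A (e i) j := by
          rw [hpat, hei]
          exact fun h => hij (hginj' h)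
        exact Real.sign_of_pos hpos
  · -- backward: sign pattern → indivisible
    rintro ⟨P, Q, ⟨σ, hP⟩, ⟨ρ, hQ⟩, hsgn⟩
    have hentry : ∀ i j, (P * A * Q) i j = A (σ.symm i) (ρ j) := by
      intro i j
      rw [mul_perm_apply hQ (P * A) i j, perm_mul_apply hP A i (ρ j)]
    have hsgn' : ∀ i j, Real.sign (A (σ.symm i) (ρ j)) = if i = j then 0 else 1 := by
      intro i j
      have h := congrFun (congrFun hsgn i) j
      rw [Matrix.map_apply, hentry, targ i j] at h
      exact h
    set fe : Equiv.Perm (Fin 3) := ρ.symm.trans σ.symm with hfe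
    have hpat : ∀ a bb, 0 < A a bb ↔ a ≠ fe bb := by
      intro a bb
      have h := hsgn' (σ a) (ρ.symm bb)
      rw [Equiv.symm_apply_apply, Equiv.apply_symm_apply] at h
      have hfeb : fe bb = σ.symm (ρ.symm bb) := rfl
      by_cases hc : σ a = ρ.symm bb
      · rw [if_pos hc] at h
        have hz : A a bb = 0 := Real.sign_eq_zero_iff.mp h
        constructor
        · intro hp
          exact absurd hz hp.ne'
        · intro hne
          exfalso
          apply hne
          rw [hfeb, ← hc, Equiv.symm_apply_apply]
      · rw [if_neg hc] at h
        have hp := sign_one_pos (hA.1 a bb) h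
        refine ⟨fun _ hcontra => ?_, fun _ => hp⟩
        apply hc
        rw [hcontra, hfeb, Equiv.apply_symm_apply]
    intro B C hBs hCs hfact
    have hprod : ∀ i j, 0 < A i j ↔ ∃ k, 0 < B i k ∧ 0 < C k j := by
      intro i j
      rw [hfact]
      exact prod_pos_iff hBs hCs i j
    have hnotboth : ¬(IsPermMatrix B ∧ IsPermMatrix C) := by
      rintro ⟨hBp, hCp⟩
      have hAperm : IsPermMatrix (B * C) := perm_mul_perm hBp hCp
      rw [← hfact] at hAperm
      obtain ⟨τ, hτ⟩ := hAperm
      obtain ⟨u, v, huv, hu, hv, _⟩ := fin3_two (fe 0)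
      have h1 : u = τ 0 := (perm_entry_pos hτ u 0).mp ((hpat u 0).mpr hu)
      have h2 : v = τ 0 := (perm_entry_pos hτ v 0).mp ((hpat v 0).mpr hv)
      exact huv (h1.trans h2.symm)
    have hH : ∀ i mm, (∃ k, 0 < B i k ∧ 0 < C k (fe.symm mm)) ↔ i ≠ mm := by
      intro i mm
      rw [← hprod i (fe.symm mm), hpat i (fe.symm mm), Equiv.apply_symm_apply]
    have hCc : ∀ mm, ∃ k, 0 < C k (fe.symm mm) := fun mm => col_pos hCs _
    rcases core (fun i k => 0 < B i k) (fun k mm => 0 < C k (fe.symm mm)) hCc hH with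
      ⟨g, hg, hgp⟩ | ⟨g, hg, hgp⟩
    · have hBperm : IsPermMatrix B := perm_of_pattern hBs hg hgp
      exact Or.inl ⟨hBperm, fun hCp => hnotboth ⟨hBperm, hCp⟩⟩
    · have hCperm : IsPermMatrix C := by
        refine perm_of_pattern hCs (g := fun j => g (fe j)) (fun a b h => fe.injective (hg h)) ?_
        intro k j
        have h := hgp k (fe j)
        rwa [Equiv.symm_apply_apply] at h
      exact Or.inr ⟨hCperm, fun hBp => hnotboth ⟨hBp, hCperm⟩⟩
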